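/- Applying the composition of divided-difference-type operators ∂̂_{n−1}⋯∂̂₂∂̂₁ to the staircase monomial x^{ρ⁽ⁿ⁾} = x₁^{n−1}x₂^{n−2}⋯x_{n−1} yields (1−x₁)(1−x₂)⋯(1−x_{n−1}) · x₁^{n−2}x₂^{n−3}⋯x_{n−2}. -/

import Mathlib

open MvPolynomial

/-- The rational function field `ℚ(x₁, …, xₙ)`. -/
abbrev Kf (n : ℕ) := FractionRing (MvPolynomial (Fin n) ℚ)

/-- The variable `xᵢ` as an element of `ℚ(x₁, …, xₙ)`. -/
noncomputable def Xf (n : ℕ) (i : Fin n) : Kf n :=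
  algebraMap (MvPolynomial (Fin n) ℚ) (Kf n) (MvPolynomial.X i)

/-- The field automorphism of `ℚ(x₁, …, xₙ)` exchanging the variables `xᵢ` and `xⱼ`. -/
noncomputable def swapf (n : ℕ) (i j : Fin n) : Kf n ≃+* Kf n :=
  IsFractionRing.ringEquivOfRingEquiv
    (MvPolynomial.renameEquiv ℚ (Equiv.swap i j)).toRingEquiv

/-- The divided difference operator `Aᵢⱼ f = (f - sᵢⱼ f)/(xᵢ - xⱼ)`. -/
noncomputable def Af (n : ℕ) (i j : Fin n) (f : Kf n) : Kf n :=
  (f - swapf n i j f) / (Xf n i - Xf n j)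

/-- The Demazure operator `π̃ᵢ = Aᵢ ∘ (1 - x_{i+1})` (here with indices `i, j`). -/
noncomputable def pitf (n : ℕ) (i j : Fin n) (f : Kf n) : Kf n :=
  Af n i j ((1 - Xf n j) * f)

/-- The operator `∂̂ᵢ := (1 - xᵢ)·Aᵢ` on `ℚ(x₁,…,xₙ)`, for a natural-number index
(acting as the identity for out-of-range indices). -/
noncomputable def parhf (n : ℕ) (i : ℕ) (f : Kf n) : Kf n :=
  if h : i + 1 < n then
    (1 - Xf n ⟨i, Nat.lt_of_succ_lt h⟩) * Af n ⟨i, Nat.lt_of_succ_lt h⟩ ⟨i + 1, h⟩ f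
  else f

lemma swapf_X (n : ℕ) (i j l : Fin n) :
    swapf n i j (Xf n l) = Xf n (Equiv.swap i j l) := by
  simp [swapf, Xf, IsFractionRing.ringEquivOfRingEquiv_algebraMap]

lemma Xf_sub_ne (n : ℕ) (i j : Fin n) (h : i ≠ j) : Xf n i - Xf n j ≠ 0 := by
  rw [sub_ne_zero, Xf, Xf]
  exact fun he => h (MvPolynomial.X_injective (IsFractionRing.injective _ _ he))

/-- exponent pattern -/
def Ee (n k : ℕ) (i : Fin n) : ℕ := if i.val < k then n - 2 - i.val else n - 1 - i.val

noncomputable def Pp (n k : ℕ) : Kf n := ∏ i : Fin n, Xf n i ^ Ee n k i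

noncomputable def Qq (n k : ℕ) : Kf n := ∏ i : Fin n, if i.val < k then 1 - Xf n i else 1

lemma Qq_succ {n k : ℕ} (hk : k < n) :
    Qq n (k + 1) = (1 - Xf n ⟨k, hk⟩) * Qq n k := by
  unfold Qq
  rw [← Finset.mul_prod_erase _ _ (Finset.mem_univ (⟨k, hk⟩ : Fin n)),
      ← Finset.mul_prod_erase _ (fun i : Fin n => if i.val < k then 1 - Xf n i else 1)
        (Finset.mem_univ (⟨k, hk⟩ : Fin n))]
  simp only [if_pos (Nat.lt_succ_self k), if_neg (lt_irrefl k), one_mul]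
  congr 1
  refine Finset.prod_congr rfl fun i hi => ?_
  have : i.val ≠ k := fun h => (Finset.mem_erase.mp hi).1 (Fin.ext h)
  have : (i.val < k + 1) ↔ (i.val < k) := by omega
  exact if_congr this rfl rfl

lemma key_step {n k : ℕ} (h : k + 1 < n) :
    parhf n k (Qq n k * Pp n k) = Qq n (k + 1) * Pp n (k + 1) := by
  have hk : k < n := Nat.lt_of_succ_lt h
  set k' : Fin n := ⟨k, hk⟩
  set k'' : Fin n := ⟨k + 1, h⟩
  have hne : k' ≠ k'' := by simp [k', k', k'', Fin.ext_iff]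
  set σ := Equiv.swap k' k'' with hσ
  -- swapf fixes Qq
  have hQ : swapf n k' k'' (Qq n k) = Qq n k := by
    unfold Qq
    rw [map_prod]
    refine Finset.prod_congr rfl fun i _ => ?_
    by_cases hi : i.val < k
    · rw [if_pos hi, map_sub, map_one, swapf_X]
      have h1 : i ≠ k' := by simp [k', Fin.ext_iff]; omega
      have h2 : i ≠ k'' := by simp [k'', Fin.ext_iff]; omega
      rw [Equiv.swap_apply_of_ne_of_ne h1 h2]
    · rw [if_neg hi, map_one]
  -- swapf on Pp
  have hP : swapf n k' k'' (Pp n k) = ∏ i : Fin n, Xf n i ^ Ee n k (σ i) := by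
    unfold Pp
    rw [map_prod]
    simp only [map_pow, swapf_X]
    refine Fintype.prod_equiv σ _ _ fun i => ?_
    rw [hσ, Equiv.swap_apply_self]
  set m := n - 2 - k with hm
  have hsplit : ∀ f : Fin n → Kf n,
      ∏ i : Fin n, f i = f k' * (f k'' * ∏ i ∈ (Finset.univ.erase k').erase k'', f i) := by
    intro f
    rw [← Finset.mul_prod_erase _ _ (Finset.mem_univ k'),
        ← Finset.mul_prod_erase _ _ (Finset.mem_erase.mpr ⟨Ne.symm hne, Finset.mem_univ k''⟩)]
  set s := (Finset.univ.erase k').erase k'' with hs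
  have hmem : ∀ i ∈ s, i ≠ k' ∧ i ≠ k'' := by
    intro i hi
    exact ⟨(Finset.mem_erase.mp (Finset.mem_erase.mp hi).2).1, (Finset.mem_erase.mp hi).1⟩
  set R := ∏ i ∈ s, Xf n i ^ Ee n k i with hR
  have hEk' : Ee n k k' = m + 1 := by simp only [Ee, k', k'', Fin.val_mk]; split <;> omega
  have hEk'' : Ee n k k'' = m := by simp only [Ee, k', k'', Fin.val_mk]; split <;> omega
  have hP1 : Pp n k = Xf n k' ^ (m + 1) * (Xf n k'' ^ m * R) := by
    rw [Pp, hsplit, hEk', hEk'']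
  have hP2 : (∏ i : Fin n, Xf n i ^ Ee n k (σ i))
      = Xf n k' ^ m * (Xf n k'' ^ (m + 1) * R) := by
    rw [hsplit]
    rw [hσ]
    rw [Equiv.swap_apply_left, Equiv.swap_apply_right, hEk', hEk'']
    have : ∏ i ∈ s, Xf n i ^ Ee n k (σ i) = R := by
      refine Finset.prod_congr rfl fun i hi => ?_
      rw [hσ, Equiv.swap_apply_of_ne_of_ne (hmem i hi).1 (hmem i hi).2]
    rw [this]
  have hP3 : Pp n (k + 1) = Xf n k' ^ m * (Xf n k'' ^ m * R) := by
    rw [Pp, hsplit]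
    have e1 : Ee n (k + 1) k' = m := by simp only [Ee, k', k'', Fin.val_mk]; split <;> omega
    have e2 : Ee n (k + 1) k'' = m := by simp only [Ee, k', k'', Fin.val_mk]; split <;> omega
    rw [e1, e2]
    have : ∏ i ∈ s, Xf n i ^ Ee n (k + 1) i = R := by
      refine Finset.prod_congr rfl fun i hi => ?_
      have h1 : i.val ≠ k := fun hh => (hmem i hi).1 (Fin.ext hh)
      have h2 : i.val ≠ k + 1 := fun hh => (hmem i hi).2 (Fin.ext hh)
      congr 1
      simp only [Ee]
      have hiff : (i.val < k + 1) ↔ (i.val < k) := by omega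
      exact if_congr hiff rfl rfl
    rw [this]
  have hd : Xf n k' - Xf n k'' ≠ 0 := Xf_sub_ne n k' k'' hne
  rw [parhf, dif_pos h]
  show (1 - Xf n k') * Af n k' k'' (Qq n k * Pp n k) = _
  rw [Af, map_mul, hQ, hP, hP1, hP2]
  have hnum : Qq n k * (Xf n k' ^ (m + 1) * (Xf n k'' ^ m * R)) -
      Qq n k * (Xf n k' ^ m * (Xf n k'' ^ (m + 1) * R)) =
      (Xf n k' - Xf n k'') * (Qq n k * (Xf n k' ^ m * (Xf n k'' ^ m * R))) := by
    ring
  rw [hnum, mul_comm (Xf n k' - Xf n k''), mul_div_assoc, div_self hd, mul_one,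
      Qq_succ hk, hP3]
  show (1 - Xf n k') * (Qq n k * (Xf n k' ^ m * (Xf n k'' ^ m * R))) =
      (1 - Xf n k') * Qq n k * (Xf n k' ^ m * (Xf n k'' ^ m * R))
  ring

lemma main_ind (n : ℕ) : ∀ k, k ≤ n - 1 →
    (List.range k).foldl (fun f i => parhf n i f)
        (∏ i : Fin n, Xf n i ^ (n - 1 - i.val)) = Qq n k * Pp n k := by
  intro k
  induction k with
  | zero =>
    intro _
    simp [Qq, Pp, Ee]
  | succ k ih =>
    intro hk
    have hk' : k + 1 < n := by omega
    rw [List.range_succ, List.foldl_append, ih (by omega)]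
    simpa using key_step hk'

/-- Applying `∂̂_{n-1} ⋯ ∂̂₂ ∂̂₁` to the staircase monomial
`x^{ρ⁽ⁿ⁾} = x₁^{n-1} x₂^{n-2} ⋯ x_{n-1}` yields
`(1-x₁)(1-x₂)⋯(1-x_{n-1}) · x₁^{n-2} x₂^{n-3} ⋯ x_{n-2}`. -/
theorem parh_staircase (n : ℕ) :
    (List.range (n - 1)).foldl (fun f i => parhf n i f)
        (∏ i : Fin n, Xf n i ^ (n - 1 - i.val))
      = (∏ i : Fin n, if i.val + 1 < n then 1 - Xf n i else 1) *
          ∏ i : Fin n, Xf n i ^ (n - 2 - i.val) := by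
  rw [main_ind n (n - 1) le_rfl]
  unfold Qq Pp
  congr 1
  · refine Finset.prod_congr rfl fun i _ => ?_
    have : (i.val < n - 1) ↔ (i.val + 1 < n) := by omega
    exact if_congr this rfl rfl
  · refine Finset.prod_congr rfl fun i _ => ?_
    congr 1
    simp only [Ee]
    have hi := i.isLt
    split <;> omega
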